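/- Fix real numbers u1 < u2 and s1, s2 ∈ ℝ. For t > 0 define integers x_i(t) = ⌊−2 u_i t^{2/3} − s_i t^{1/3}⌋ and n_i(t) = ⌊t/4 + u_i t^{2/3}⌋ for i = 1, 2. Then lim_{t→∞} t^{1/3} · binom(x1(t) − x2(t) − 1, n2(t) − n1(t) − 1) · 2^{x2(t) − x1(t)} = (1/√(4π(u2−u1))) · exp(−(s2−s1)²/(4(u2−u1))). (Here, for all t large enough, x1(t) − x2(t) − 1 ≥ n2(t) − n1(t) − 1 ≥ 0, so the binomial coefficient is the usual one on natural numbers.) -/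

import Mathlib

open Filter

/-- The rescaled particle position `x(u,s,t) = ⌊-2u·t^{2/3} - s·t^{1/3}⌋`. -/
noncomputable def xPos (u s t : ℝ) : ℤ :=
  ⌊-2 * u * t ^ ((2 : ℝ) / 3) - s * t ^ ((1 : ℝ) / 3)⌋

/-- The rescaled particle label `n(u,t) = ⌊t/4 + u·t^{2/3}⌋`. -/
noncomputable def nLab (u t : ℝ) : ℤ :=
  ⌊t / 4 + u * t ^ ((2 : ℝ) / 3)⌋


open Real Topology

noncomputable def gg (x : ℝ) : ℝ := (1+x) * Real.log (1+x) + (1-x) * Real.log (1-x)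


lemma g_approx {x : ℝ} (hx : |x| ≤ 1/2) :
    |(1+x) * Real.log (1+x) + (1-x) * Real.log (1-x) - x^2| ≤ 7 * x^4 := by
  have hx1 : |x| < 1 := lt_of_le_of_lt hx (by norm_num)
  have hxm : |(-x)| < 1 := by rwa [abs_neg]
  have h1 := Real.abs_log_sub_add_sum_range_le hx1 3
  have h2 := Real.abs_log_sub_add_sum_range_le hxm 3
  simp only [Finset.sum_range_succ, Finset.sum_range_zero] at h1 h2
  norm_num at h1 h2
  have hb : |x|^4 / (1 - |x|) ≤ 2 * x^4 := by
    rw [div_le_iff₀ (by linarith [abs_nonneg x] : (0:ℝ) < 1 - |x|)]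
    have h4 : |x|^4 = x^4 := by rw [← abs_pow, abs_of_nonneg (by positivity)]
    nlinarith [pow_nonneg (abs_nonneg x) 4, abs_nonneg x]
  ring_nf at h2 ⊢
  have e1 := abs_le.mp (h1.trans hb)
  have e2 := abs_le.mp (h2.trans hb)
  have hx' := abs_le.mp hx
  have hx4 : (0:ℝ) ≤ x^4 := by positivity
  rw [abs_le]
  constructor <;> nlinarith [e1.1, e1.2, e2.1, e2.2,
    mul_le_mul_of_nonneg_left e2.2 (by linarith : (0:ℝ) ≤ 1 + x),
    mul_le_mul_of_nonneg_left e1.2 (by linarith : (0:ℝ) ≤ 1 - x),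
    mul_le_mul_of_nonneg_left e2.1 (by linarith : (0:ℝ) ≤ 1 + x),
    mul_le_mul_of_nonneg_left e1.1 (by linarith : (0:ℝ) ≤ 1 - x)]

lemma key_identity (M K : ℕ) (hK : 1 ≤ K) (hKM : K + 1 ≤ M) :
    ((M.choose K : ℕ) : ℝ) / 2 ^ (M + 1) =
      Stirling.stirlingSeq M / (Stirling.stirlingSeq K * Stirling.stirlingSeq (M - K)) *
        Real.exp (-((M : ℝ) * gg ((2 * (K:ℝ) - M) / M) / 2)) *
        (Real.sqrt ((M : ℝ) / (2 * K * ((M:ℝ) - K))) / 2) := by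
  have hKM' : K ≤ M := le_trans (Nat.le_succ K) hKM
  have hk0 : (0:ℝ) < K := by exact_mod_cast hK
  have hk1m : (K:ℝ) + 1 ≤ M := by exact_mod_cast hKM
  have hmk : (0:ℝ) < (M:ℝ) - K := by linarith
  have hm0 : (0:ℝ) < M := by linarith
  have hcast : ((M - K : ℕ) : ℝ) = (M:ℝ) - K := by
    push_cast [hKM']; ring
  have hMK1 : 1 ≤ M - K := by omega
  have hfac : ∀ n : ℕ, 1 ≤ n →
      ((Nat.factorial n : ℕ) : ℝ) = Stirling.stirlingSeq n * (Real.sqrt (2*n) * ((n:ℝ)/Real.exp 1)^n) := by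
    intro n hn
    have hn0 : (0:ℝ) < n := by exact_mod_cast hn
    have h : (0:ℝ) < Real.sqrt (2*n) * ((n:ℝ)/Real.exp 1)^n := by positivity
    rw [Stirling.stirlingSeq, div_mul_cancel₀ _ h.ne']
  have hpow : ∀ (n : ℕ) (y : ℝ), 0 < y →
      (y / Real.exp 1)^n = Real.exp ((n:ℝ) * (Real.log y - 1)) := by
    intro n y hy
    rw [Real.exp_nat_mul, Real.exp_sub, Real.exp_log hy]
  set x := (2 * (K:ℝ) - M) / M with hxdef
  have h1x : 1 + x = 2*(K:ℝ)/M := by rw [hxdef]; field_simp; ring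
  have h1mx : 1 - x = 2*((M:ℝ)-K)/M := by rw [hxdef]; field_simp; ring
  have hlog1 : Real.log (1+x) = Real.log 2 + Real.log K - Real.log M := by
    rw [h1x, Real.log_div (by positivity) hm0.ne', Real.log_mul two_ne_zero hk0.ne']
  have hlog2 : Real.log (1-x) = Real.log 2 + Real.log ((M:ℝ)-K) - Real.log M := by
    rw [h1mx, Real.log_div (by positivity) hm0.ne', Real.log_mul two_ne_zero hmk.ne']
  have hexpid : -((M:ℝ) * gg x / 2) =
      (M:ℝ)*(Real.log M - 1) - (K:ℝ)*(Real.log K - 1)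
        - ((M:ℝ)-K)*(Real.log ((M:ℝ)-K) - 1) - (((M:ℝ)+1))*Real.log 2 + Real.log 2 := by
    rw [gg, hlog1, hlog2, h1x, h1mx]
    field_simp
    ring
  have hsqrt : Real.sqrt ((M:ℝ)/(2*K*((M:ℝ)-K)))
      = Real.sqrt (2*(M:ℝ)) / (Real.sqrt (2*(K:ℝ)) * Real.sqrt (2*((M:ℝ)-K))) := by
    rw [show (M:ℝ)/(2*K*((M:ℝ)-K)) = (2*M)/((2*K)*(2*((M:ℝ)-K))) by
      field_simp]
    rw [Real.sqrt_div (by positivity : (0:ℝ) ≤ 2*(M:ℝ)),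
      Real.sqrt_mul (by positivity : (0:ℝ) ≤ 2*(K:ℝ))]
  have hsM : 0 < Stirling.stirlingSeq M := by
    have h := Stirling.stirlingSeq'_pos (M-1)
    have e : M - 1 + 1 = M := by omega
    rwa [e] at h
  have hsK : 0 < Stirling.stirlingSeq K := by
    have h := Stirling.stirlingSeq'_pos (K-1)
    have e : K - 1 + 1 = K := by omega
    rwa [e] at h
  have hsMK : 0 < Stirling.stirlingSeq (M-K) := by
    have h := Stirling.stirlingSeq'_pos (M-K-1)
    have e : M - K - 1 + 1 = M - K := by omega
    rwa [e] at h
  have h2pow : (2:ℝ)^(M+1) = Real.exp (((M:ℝ)+1) * Real.log 2) := by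
    rw [show ((M:ℝ)+1) = ((M+1 : ℕ):ℝ) by push_cast; ring, Real.exp_nat_mul,
      Real.exp_log two_pos]
  rw [Nat.cast_choose ℝ hKM', hfac M (by omega), hfac K hK, hfac (M-K) hMK1, hcast,
    hpow M _ hm0, hpow K _ hk0, hpow (M-K) _ hmk, hcast, h2pow, hexpid, hsqrt,
    Real.exp_add, Real.exp_sub, Real.exp_sub, Real.exp_sub, Real.exp_log two_pos]
  have e1 := Real.exp_ne_zero ((M:ℝ)*(Real.log M - 1))
  have e2 := Real.exp_ne_zero ((K:ℝ)*(Real.log K - 1))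
  have e3 := Real.exp_ne_zero (((M:ℝ)-K)*(Real.log ((M:ℝ)-K) - 1))
  have e4 := Real.exp_ne_zero (((M:ℝ)+1)*Real.log 2)
  have q1 : Real.sqrt (2*(M:ℝ)) ≠ 0 := by positivity
  have q2 : Real.sqrt (2*(K:ℝ)) ≠ 0 := by positivity
  have q3 : Real.sqrt (2*((M:ℝ)-K)) ≠ 0 := by positivity
  field_simp

lemma tendsto_aux {f : ℝ → ℝ} {c : ℝ} (C : ℝ) {e : ℝ} (he : 0 < e)
    (h : ∀ᶠ t in atTop, |f t - c| ≤ C * t ^ (-e)) : Tendsto f atTop (𝓝 c) := by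
  have h0 : Tendsto (fun t : ℝ => C * t ^ (-e)) atTop (𝓝 0) := by
    simpa using (tendsto_rpow_neg_atTop he).const_mul C
  have h1 : Tendsto (fun t => f t - c) atTop (𝓝 0) :=
    squeeze_zero_norm' (by simpa [Real.norm_eq_abs] using h) h0
  simpa using h1.add_const c

lemma alg1 (m S : ℝ) (hS : S ≠ 0) : m/(S*S)*S = m/S := by field_simp
lemma alg2 (c m S : ℝ) (hS : S ≠ 0) (hm : m ≠ 0) : (c/S)/(m/S) = c/m := by
  field_simp
lemma alg3 (c m S : ℝ) (hS : S ≠ 0) (hm : m ≠ 0) :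
    7*(c/S)^4/(2*(m/(S*S))^3*(S*S)) = m*(7*(c/m)^4)/2 := by field_simp
lemma alg4 (c m S : ℝ) (hS : S ≠ 0) (hm : m ≠ 0) :
    (c/S)^2/(2*(m/(S*S))) = m*(c/m)^2/2 := by field_simp
lemma alg5 (m k T : ℝ) (hT : T ≠ 0) (hk : k ≠ 0) (hmk : m - k ≠ 0) :
    (m/T)/(2*(k/T)*((m-k)/T)) = T*(m/(2*k*(m-k))) := by field_simp
lemma alg6 (p q E : ℝ) (hp : p ≠ 0) (hq : q ≠ 0) :
    p/(p*p)*E*(1/q/2) = 1/(2*(p*q))*E := by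
  field_simp

lemma main_aux (a b : ℝ) (ha : 0 < a) (Mz Kz : ℝ → ℤ)
    (hm1 : ∀ t : ℝ, 2*a*t^((2:ℝ)/3) + b*t^((1:ℝ)/3) - 2 < ((Mz t : ℤ) : ℝ))
    (hm2 : ∀ t : ℝ, ((Mz t : ℤ) : ℝ) < 2*a*t^((2:ℝ)/3) + b*t^((1:ℝ)/3))
    (hk1 : ∀ t : ℝ, a*t^((2:ℝ)/3) - 2 < ((Kz t : ℤ) : ℝ))
    (hk2 : ∀ t : ℝ, ((Kz t : ℤ) : ℝ) < a*t^((2:ℝ)/3)) :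
    (∀ᶠ t : ℝ in atTop, 0 ≤ Kz t ∧ Kz t ≤ Mz t) ∧
      Tendsto (fun t : ℝ => t ^ ((1:ℝ)/3) * ((Mz t).toNat.choose (Kz t).toNat : ℝ) *
          (2:ℝ) ^ (-(Mz t) - 1)) atTop
        (𝓝 (1 / Real.sqrt (4 * Real.pi * a) * Real.exp (-b^2 / (4*a)))) := by
  -- basic limits
  have L1 : Tendsto (fun t : ℝ => (Mz t : ℝ) / t ^ ((2:ℝ)/3)) atTop (𝓝 (2*a)) := by
    refine tendsto_aux (|b| + 2) (by norm_num : (0:ℝ) < 1/3) ?_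
    filter_upwards [eventually_ge_atTop (1:ℝ)] with t ht1
    have ht : (0:ℝ) < t := lt_of_lt_of_le one_pos ht1
    have hT : (0:ℝ) < t ^ ((2:ℝ)/3) := Real.rpow_pos_of_pos ht _
    have hS : (0:ℝ) < t ^ ((1:ℝ)/3) := Real.rpow_pos_of_pos ht _
    have hS1 : (1:ℝ) ≤ t ^ ((1:ℝ)/3) := by
      calc (1:ℝ) = 1 ^ ((1:ℝ)/3) := (Real.one_rpow _).symm
        _ ≤ t ^ ((1:ℝ)/3) := Real.rpow_le_rpow zero_le_one ht1 (by norm_num)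
    have hST : t ^ ((1:ℝ)/3) / t ^ ((2:ℝ)/3) = t ^ (-((1:ℝ)/3)) := by
      rw [← Real.rpow_sub ht]; norm_num
    have key : (Mz t : ℝ) / t ^ ((2:ℝ)/3) - 2*a
        = ((Mz t : ℝ) - 2*a*t^((2:ℝ)/3)) / t ^ ((2:ℝ)/3) := by field_simp
    rw [key, abs_div, abs_of_pos hT]
    have hnum : |(Mz t : ℝ) - 2*a*t^((2:ℝ)/3)| ≤ (|b|+2) * t ^ ((1:ℝ)/3) := by
      have h1 := hm1 t; have h2 := hm2 t
      rw [abs_le]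
      constructor <;> nlinarith [neg_abs_le b, le_abs_self b, hS1, hS.le, abs_nonneg b]
    calc |(Mz t : ℝ) - 2*a*t^((2:ℝ)/3)| / t ^ ((2:ℝ)/3)
        ≤ ((|b|+2) * t ^ ((1:ℝ)/3)) / t ^ ((2:ℝ)/3) := by gcongr
      _ = (|b|+2) * t ^ (-((1:ℝ)/3)) := by rw [mul_div_assoc, hST]
  have L2 : Tendsto (fun t : ℝ => (Kz t : ℝ) / t ^ ((2:ℝ)/3)) atTop (𝓝 a) := by
    refine tendsto_aux 2 (by norm_num : (0:ℝ) < 2/3) ?_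
    filter_upwards [eventually_ge_atTop (1:ℝ)] with t ht1
    have ht : (0:ℝ) < t := lt_of_lt_of_le one_pos ht1
    have hT : (0:ℝ) < t ^ ((2:ℝ)/3) := Real.rpow_pos_of_pos ht _
    have hTn : t ^ (-((2:ℝ)/3)) = 1 / t ^ ((2:ℝ)/3) := by
      rw [Real.rpow_neg ht.le]; exact (one_div _).symm
    have key : (Kz t : ℝ) / t ^ ((2:ℝ)/3) - a
        = ((Kz t : ℝ) - a*t^((2:ℝ)/3)) / t ^ ((2:ℝ)/3) := by field_simp
    rw [key, abs_div, abs_of_pos hT, hTn]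
    have hnum : |(Kz t : ℝ) - a*t^((2:ℝ)/3)| ≤ 2 := by
      have h1 := hk1 t; have h2 := hk2 t
      rw [abs_le]; constructor <;> nlinarith
    rw [mul_one_div]
    gcongr
  have L3 : Tendsto (fun t : ℝ => (2*(Kz t : ℝ) - Mz t) / t ^ ((1:ℝ)/3)) atTop (𝓝 (-b)) := by
    refine tendsto_aux 4 (by norm_num : (0:ℝ) < 1/3) ?_
    filter_upwards [eventually_ge_atTop (1:ℝ)] with t ht1
    have ht : (0:ℝ) < t := lt_of_lt_of_le one_pos ht1
    have hS : (0:ℝ) < t ^ ((1:ℝ)/3) := Real.rpow_pos_of_pos ht _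
    have hS1 : (1:ℝ) ≤ t ^ ((1:ℝ)/3) := by
      calc (1:ℝ) = 1 ^ ((1:ℝ)/3) := (Real.one_rpow _).symm
        _ ≤ t ^ ((1:ℝ)/3) := Real.rpow_le_rpow zero_le_one ht1 (by norm_num)
    have hSn : t ^ (-((1:ℝ)/3)) = 1 / t ^ ((1:ℝ)/3) := by
      rw [Real.rpow_neg ht.le]; exact (one_div _).symm
    have key : (2*(Kz t : ℝ) - Mz t) / t ^ ((1:ℝ)/3) - (-b)
        = ((2*(Kz t : ℝ) - Mz t) + b * t^((1:ℝ)/3)) / t ^ ((1:ℝ)/3) := by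
      field_simp; ring
    rw [key, abs_div, abs_of_pos hS, hSn, mul_one_div]
    have hnum : |(2*(Kz t : ℝ) - Mz t) + b * t^((1:ℝ)/3)| ≤ 4 := by
      have h1 := hm1 t; have h2 := hm2 t; have h3 := hk1 t; have h4 := hk2 t
      rw [abs_le]; constructor <;> nlinarith
    gcongr
  have Lq : Tendsto (fun t : ℝ => ((Mz t : ℝ) - Kz t) / t ^ ((2:ℝ)/3)) atTop (𝓝 a) := by
    have h := L1.sub L2
    have : (2*a - a) = a := by ring
    rw [this] at h
    refine h.congr fun t => ?_
    rw [← sub_div]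
  -- atTop limits
  have hTat : Tendsto (fun t : ℝ => t ^ ((2:ℝ)/3)) atTop atTop :=
    tendsto_rpow_atTop (by norm_num)
  have hSat : Tendsto (fun t : ℝ => t ^ ((1:ℝ)/3)) atTop atTop :=
    tendsto_rpow_atTop (by norm_num)
  have hkat : Tendsto (fun t : ℝ => (Kz t : ℝ)) atTop atTop := by
    refine (Tendsto.pos_mul_atTop ha L2 hTat).congr' ?_
    filter_upwards [eventually_gt_atTop (0:ℝ)] with t ht
    have hT : t ^ ((2:ℝ)/3) ≠ 0 := (Real.rpow_pos_of_pos ht _).ne'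
    field_simp
  have hmkat : Tendsto (fun t : ℝ => (Mz t : ℝ) - Kz t) atTop atTop := by
    refine (Tendsto.pos_mul_atTop ha Lq hTat).congr' ?_
    filter_upwards [eventually_gt_atTop (0:ℝ)] with t ht
    have hT : t ^ ((2:ℝ)/3) ≠ 0 := (Real.rpow_pos_of_pos ht _).ne'
    field_simp
  have hmat : Tendsto (fun t : ℝ => (Mz t : ℝ)) atTop atTop := by
    refine (Tendsto.pos_mul_atTop (by linarith : (0:ℝ) < 2*a) L1 hTat).congr' ?_
    filter_upwards [eventually_gt_atTop (0:ℝ)] with t ht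
    have hT : t ^ ((2:ℝ)/3) ≠ 0 := (Real.rpow_pos_of_pos ht _).ne'
    field_simp
  -- eventual facts
  have ev1 : ∀ᶠ t : ℝ in atTop, 1 ≤ (Kz t : ℝ) := hkat.eventually_ge_atTop 1
  have ev2 : ∀ᶠ t : ℝ in atTop, 1 ≤ (Mz t : ℝ) - Kz t := hmkat.eventually_ge_atTop 1
  have ev3 : ∀ᶠ t : ℝ in atTop, (1:ℝ) ≤ t := eventually_ge_atTop 1
  constructor
  · filter_upwards [ev1, ev2] with t h1 h2
    constructor
    · have : (0:ℝ) ≤ (Kz t : ℝ) := by linarith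
      exact_mod_cast this
    · have : (Kz t : ℝ) ≤ (Mz t : ℝ) := by linarith
      exact_mod_cast this
  -- cast equalities
  have evM0 : ∀ᶠ t : ℝ in atTop, (((Mz t).toNat : ℕ) : ℝ) = (Mz t : ℝ) := by
    filter_upwards [ev1, ev2] with t h1 h2
    have h0' : 0 ≤ Mz t := by exact_mod_cast (by linarith : (0:ℝ) ≤ (Mz t : ℝ))
    rw [← Int.cast_natCast (R := ℝ), Int.toNat_of_nonneg h0']
  have evK0 : ∀ᶠ t : ℝ in atTop, (((Kz t).toNat : ℕ) : ℝ) = (Kz t : ℝ) := by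
    filter_upwards [ev1] with t h1
    have h0' : 0 ≤ Kz t := by exact_mod_cast (by linarith : (0:ℝ) ≤ (Kz t : ℝ))
    rw [← Int.cast_natCast (R := ℝ), Int.toNat_of_nonneg h0']
  have evKM : ∀ᶠ t : ℝ in atTop, (Kz t).toNat ≤ (Mz t).toNat := by
    filter_upwards [ev1, ev2] with t h1 h2
    have : Kz t ≤ Mz t := by exact_mod_cast (by linarith : (Kz t : ℝ) ≤ (Mz t : ℝ))
    exact Int.toNat_le_toNat this
  have evMK0 : ∀ᶠ t : ℝ in atTop,
      ((((Mz t).toNat - (Kz t).toNat : ℕ)) : ℝ) = (Mz t : ℝ) - Kz t := by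
    filter_upwards [evKM, evM0, evK0] with t h hm hk
    rw [Nat.cast_sub h, hm, hk]
  -- natural number tendstos
  have hMnat : Tendsto (fun t : ℝ => (Mz t).toNat) atTop atTop := by
    rw [← tendsto_natCast_atTop_iff (R := ℝ)]
    exact hmat.congr' (evM0.mono fun t h => h.symm)
  have hKnat : Tendsto (fun t : ℝ => (Kz t).toNat) atTop atTop := by
    rw [← tendsto_natCast_atTop_iff (R := ℝ)]
    exact hkat.congr' (evK0.mono fun t h => h.symm)
  have hMKnat : Tendsto (fun t : ℝ => (Mz t).toNat - (Kz t).toNat) atTop atTop := by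
    rw [← tendsto_natCast_atTop_iff (R := ℝ)]
    exact hmkat.congr' (evMK0.mono fun t h => h.symm)
  -- Stirling factor
  have hsPi := Stirling.tendsto_stirlingSeq_sqrt_pi
  have hSM : Tendsto (fun t : ℝ => Stirling.stirlingSeq (Mz t).toNat) atTop
      (𝓝 (Real.sqrt π)) := hsPi.comp hMnat
  have hSK : Tendsto (fun t : ℝ => Stirling.stirlingSeq (Kz t).toNat) atTop
      (𝓝 (Real.sqrt π)) := hsPi.comp hKnat
  have hSMK : Tendsto (fun t : ℝ => Stirling.stirlingSeq ((Mz t).toNat - (Kz t).toNat)) atTop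
      (𝓝 (Real.sqrt π)) := hsPi.comp hMKnat
  have hSfac : Tendsto (fun t : ℝ => Stirling.stirlingSeq (Mz t).toNat /
      (Stirling.stirlingSeq (Kz t).toNat * Stirling.stirlingSeq ((Mz t).toNat - (Kz t).toNat)))
      atTop (𝓝 (Real.sqrt π / (Real.sqrt π * Real.sqrt π))) :=
    hSM.div (hSK.mul hSMK) (by positivity)
  -- exp factor
  have hmS : Tendsto (fun t : ℝ => (Mz t : ℝ) / t ^ ((1:ℝ)/3)) atTop atTop := by
    refine (Tendsto.pos_mul_atTop (by linarith : (0:ℝ) < 2*a) L1 hSat).congr' ?_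
    filter_upwards [eventually_gt_atTop (0:ℝ)] with t ht
    have h23 : t ^ ((2:ℝ)/3) = t ^ ((1:ℝ)/3) * t ^ ((1:ℝ)/3) := by
      rw [← Real.rpow_add ht]; norm_num
    have hS : t ^ ((1:ℝ)/3) ≠ 0 := (Real.rpow_pos_of_pos ht _).ne'
    rw [h23]
    exact alg1 _ _ hS
  have hx0 : Tendsto (fun t : ℝ => (2*(Kz t : ℝ) - Mz t)/(Mz t : ℝ)) atTop (𝓝 0) := by
    refine (L3.div_atTop hmS).congr' ?_
    filter_upwards [ev1, ev2, eventually_gt_atTop (0:ℝ)] with t h1 h2 ht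
    have hS : t ^ ((1:ℝ)/3) ≠ 0 := (Real.rpow_pos_of_pos ht _).ne'
    have hm : (Mz t : ℝ) ≠ 0 := (by linarith : (0:ℝ) < (Mz t : ℝ)).ne'
    exact alg2 _ _ _ hS hm
  have hxhalf : ∀ᶠ t : ℝ in atTop, |(2*(Kz t : ℝ) - Mz t)/(Mz t : ℝ)| ≤ 1/2 := by
    have h := Metric.tendsto_nhds.mp hx0 (1/2) (by norm_num)
    filter_upwards [h] with t h'
    rw [Real.dist_eq, sub_zero] at h'
    exact h'.le
  have hmain : Tendsto (fun t : ℝ =>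
      ((2*(Kz t : ℝ) - Mz t)/t^((1:ℝ)/3))^2 / (2*((Mz t : ℝ)/t^((2:ℝ)/3)))) atTop
      (𝓝 ((-b)^2/(2*(2*a)))) :=
    (L3.pow 2).div (L1.const_mul 2) (by positivity)
  have herr : Tendsto (fun t : ℝ => (Mz t : ℝ) *
      (gg ((2*(Kz t : ℝ) - Mz t)/(Mz t : ℝ)) - ((2*(Kz t : ℝ) - Mz t)/(Mz t : ℝ))^2) / 2)
      atTop (𝓝 0) := by
    have hden : Tendsto (fun t : ℝ => 2*((Mz t : ℝ)/t^((2:ℝ)/3))^3 * t^((2:ℝ)/3)) atTop atTop :=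
      Tendsto.pos_mul_atTop (by positivity) ((L1.pow 3).const_mul 2) hTat
    have hBf : Tendsto (fun t : ℝ => 7*((2*(Kz t : ℝ) - Mz t)/t^((1:ℝ)/3))^4 /
        (2*((Mz t : ℝ)/t^((2:ℝ)/3))^3 * t^((2:ℝ)/3))) atTop (𝓝 0) :=
      Tendsto.div_atTop ((L3.pow 4).const_mul 7) hden
    refine squeeze_zero_norm' ?_ hBf
    filter_upwards [ev1, ev2, ev3, hxhalf] with t h1 h2 ht1 hxh
    have ht : (0:ℝ) < t := lt_of_lt_of_le one_pos ht1
    have hm0 : (0:ℝ) < (Mz t : ℝ) := by linarith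
    have hS : (0:ℝ) < t ^ ((1:ℝ)/3) := Real.rpow_pos_of_pos ht _
    have hT : (0:ℝ) < t ^ ((2:ℝ)/3) := Real.rpow_pos_of_pos ht _
    have h23 : t ^ ((2:ℝ)/3) = t ^ ((1:ℝ)/3) * t ^ ((1:ℝ)/3) := by
      rw [← Real.rpow_add ht]; norm_num
    have heq : 7*((2*(Kz t : ℝ) - Mz t)/t^((1:ℝ)/3))^4 /
        (2*((Mz t : ℝ)/t^((2:ℝ)/3))^3 * t^((2:ℝ)/3))
        = (Mz t : ℝ) * (7 * ((2*(Kz t : ℝ) - Mz t)/(Mz t : ℝ))^4) / 2 := by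
      rw [h23]; exact alg3 _ _ _ hS.ne' hm0.ne'
    rw [Real.norm_eq_abs, heq]
    have habs : |(Mz t : ℝ) * (gg ((2*(Kz t : ℝ) - Mz t)/(Mz t : ℝ)) -
        ((2*(Kz t : ℝ) - Mz t)/(Mz t : ℝ))^2) / 2|
        = (Mz t : ℝ) * |gg ((2*(Kz t : ℝ) - Mz t)/(Mz t : ℝ)) -
        ((2*(Kz t : ℝ) - Mz t)/(Mz t : ℝ))^2| / 2 := by
      rw [abs_div, abs_mul, abs_of_pos hm0, abs_two]
    rw [habs]
    gcongr
    simpa [gg] using g_approx hxh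
  have hQ : Tendsto (fun t : ℝ =>
      (Mz t : ℝ) * gg ((2*(Kz t : ℝ) - Mz t)/(Mz t : ℝ)) / 2) atTop
      (𝓝 ((-b)^2/(2*(2*a)))) := by
    have hsum := hmain.add herr
    rw [add_zero] at hsum
    refine hsum.congr' ?_
    filter_upwards [ev1, ev2, ev3] with t h1 h2 ht1
    have ht : (0:ℝ) < t := lt_of_lt_of_le one_pos ht1
    have hm0 : (0:ℝ) < (Mz t : ℝ) := by linarith
    have hS : (0:ℝ) < t ^ ((1:ℝ)/3) := Real.rpow_pos_of_pos ht _
    have h23 : t ^ ((2:ℝ)/3) = t ^ ((1:ℝ)/3) * t ^ ((1:ℝ)/3) := by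
      rw [← Real.rpow_add ht]; norm_num
    have hmx : ((2*(Kz t : ℝ) - Mz t)/t^((1:ℝ)/3))^2 / (2*((Mz t : ℝ)/t^((2:ℝ)/3)))
        = (Mz t : ℝ) * ((2*(Kz t : ℝ) - Mz t)/(Mz t : ℝ))^2 / 2 := by
      rw [h23]; exact alg4 _ _ _ hS.ne' hm0.ne'
    rw [hmx]; ring
  have hE : Tendsto (fun t : ℝ => Real.exp (-((Mz t : ℝ) *
      gg ((2*(Kz t : ℝ) - Mz t)/(Mz t : ℝ)) / 2))) atTop
      (𝓝 (Real.exp (-((-b)^2/(2*(2*a)))))) :=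
    (Real.continuous_exp.tendsto _).comp hQ.neg
  -- sqrt factor
  have hinner : Tendsto (fun t : ℝ => ((Mz t : ℝ)/t^((2:ℝ)/3)) /
      (2*((Kz t : ℝ)/t^((2:ℝ)/3)) * (((Mz t : ℝ) - Kz t)/t^((2:ℝ)/3)))) atTop
      (𝓝 (2*a/(2*a*a))) :=
    L1.div ((L2.const_mul 2).mul Lq) (by positivity)
  have hsqrtinner := (Real.continuous_sqrt.tendsto _).comp hinner
  have hQ3 : Tendsto (fun t : ℝ => t^((1:ℝ)/3) *
      Real.sqrt ((Mz t : ℝ)/(2*(Kz t : ℝ)*((Mz t : ℝ) - Kz t))) / 2) atTop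
      (𝓝 (Real.sqrt (2*a/(2*a*a)) / 2)) := by
    refine (hsqrtinner.div_const 2).congr' ?_
    filter_upwards [ev1, ev2, ev3] with t h1 h2 ht1
    have ht : (0:ℝ) < t := lt_of_lt_of_le one_pos ht1
    have hk0 : (0:ℝ) < (Kz t : ℝ) := by linarith
    have hmk0 : (0:ℝ) < (Mz t : ℝ) - Kz t := by linarith
    have hT : (0:ℝ) < t^((2:ℝ)/3) := Real.rpow_pos_of_pos ht _
    have hS : (0:ℝ) < t^((1:ℝ)/3) := Real.rpow_pos_of_pos ht _
    have h23 : t ^ ((2:ℝ)/3) = t ^ ((1:ℝ)/3) * t ^ ((1:ℝ)/3) := by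
      rw [← Real.rpow_add ht]; norm_num
    have harg : ((Mz t : ℝ)/t^((2:ℝ)/3)) /
        (2*((Kz t : ℝ)/t^((2:ℝ)/3)) * (((Mz t : ℝ) - Kz t)/t^((2:ℝ)/3)))
        = t^((2:ℝ)/3) * ((Mz t : ℝ)/(2*(Kz t : ℝ)*((Mz t : ℝ) - Kz t))) := by
      exact alg5 _ _ _ hT.ne' hk0.ne' hmk0.ne'
    simp only [Function.comp_apply]
    rw [harg, Real.sqrt_mul hT.le, h23, Real.sqrt_mul_self hS.le]
  -- final assembly
  have hfinal := (hSfac.mul hE).mul hQ3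
  have hval : Real.sqrt π / (Real.sqrt π * Real.sqrt π) * Real.exp (-((-b)^2/(2*(2*a)))) *
      (Real.sqrt (2*a/(2*a*a)) / 2)
      = 1 / Real.sqrt (4*π*a) * Real.exp (-b^2/(4*a)) := by
    have h1 : Real.sqrt π * Real.sqrt π = π := Real.mul_self_sqrt Real.pi_pos.le
    have h2 : (2*a/(2*a*a)) = 1/a := by field_simp
    have h3 : Real.sqrt (4*π*a) = 2*(Real.sqrt π * Real.sqrt a) := by
      rw [show 4*π*a = (2*(Real.sqrt π * Real.sqrt a))^2 by
        rw [mul_pow, mul_pow, Real.sq_sqrt Real.pi_pos.le, Real.sq_sqrt ha.le]; ring]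
      exact Real.sqrt_sq (by positivity)
    have h4 : Real.sqrt ((1:ℝ)/a) = 1/Real.sqrt a := by
      rw [one_div, Real.sqrt_inv, one_div]
    have h5 : (-((-b)^2/(2*(2*a)))) = -b^2/(4*a) := by ring
    rw [h2, h4, h5, h3]
    have hsa : Real.sqrt a ≠ 0 := (Real.sqrt_pos.mpr ha).ne'
    have hsp : Real.sqrt π ≠ 0 := (Real.sqrt_pos.mpr Real.pi_pos).ne'
    exact alg6 _ _ _ hsp hsa
  rw [hval] at hfinal
  refine hfinal.congr' ?_
  filter_upwards [ev1, ev2, ev3, evM0, evK0] with t h1 h2 ht1 hM0 hK0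
  have ht : (0:ℝ) < t := lt_of_lt_of_le one_pos ht1
  have hm0 : (0:ℝ) < (Mz t : ℝ) := by linarith
  have hk0 : (0:ℝ) < (Kz t : ℝ) := by linarith
  have hKn1 : 1 ≤ (Kz t).toNat := by
    have : (1:ℝ) ≤ (((Kz t).toNat : ℕ) : ℝ) := by rw [hK0]; exact h1
    exact_mod_cast this
  have hKM1 : (Kz t).toNat + 1 ≤ (Mz t).toNat := by
    have : (((Kz t).toNat : ℕ) : ℝ) + 1 ≤ (((Mz t).toNat : ℕ) : ℝ) := by
      rw [hK0, hM0]; linarith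
    exact_mod_cast this
  have hkey := key_identity (Mz t).toNat (Kz t).toNat hKn1 hKM1
  rw [hM0, hK0] at hkey
  have hMz0 : 0 ≤ Mz t := by exact_mod_cast hm0.le
  have hz : (2:ℝ) ^ (-(Mz t) - 1) = ((2:ℝ) ^ ((Mz t).toNat + 1))⁻¹ := by
    rw [show -(Mz t) - 1 = -((((Mz t).toNat + 1 : ℕ)) : ℤ) by
      push_cast [Int.toNat_of_nonneg hMz0]; ring]
    rw [zpow_neg, zpow_natCast]
  have hre : t^((1:ℝ)/3) * (((Mz t).toNat.choose (Kz t).toNat : ℕ) : ℝ) *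
      ((2:ℝ) ^ ((Mz t).toNat + 1))⁻¹
      = t^((1:ℝ)/3) * ((((Mz t).toNat.choose (Kz t).toNat : ℕ) : ℝ) /
        2 ^ ((Mz t).toNat + 1)) := by ring
  rw [hz, hre, hkey]
  ring

/-- For `u1 < u2` and `s1, s2 ∈ ℝ`, with `x_i(t) = ⌊-2 u_i t^{2/3} - s_i t^{1/3}⌋` and
`n_i(t) = ⌊t/4 + u_i t^{2/3}⌋`, one has, for all `t` large enough,
`x1(t) - x2(t) - 1 ≥ n2(t) - n1(t) - 1 ≥ 0`, and
`lim_{t→∞} t^{1/3} · binom(x1(t)-x2(t)-1, n2(t)-n1(t)-1) · 2^{x2(t)-x1(t)}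
  = (1/√(4π(u2-u1))) · exp(-(s2-s1)²/(4(u2-u1)))`. -/
theorem statement1 (u1 u2 s1 s2 : ℝ) (hu : u1 < u2) :
    (∀ᶠ t : ℝ in atTop,
        0 ≤ nLab u2 t - nLab u1 t - 1 ∧
          nLab u2 t - nLab u1 t - 1 ≤ xPos u1 s1 t - xPos u2 s2 t - 1) ∧
      Tendsto (fun t : ℝ =>
          t ^ ((1 : ℝ) / 3) *
            ((Nat.choose (xPos u1 s1 t - xPos u2 s2 t - 1).toNat
                (nLab u2 t - nLab u1 t - 1).toNat : ℝ)) *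
              (2 : ℝ) ^ (xPos u2 s2 t - xPos u1 s1 t))
        atTop
        (nhds (1 / Real.sqrt (4 * Real.pi * (u2 - u1)) *
          Real.exp (-(s2 - s1) ^ 2 / (4 * (u2 - u1))))) := by

  have ha : (0:ℝ) < u2 - u1 := sub_pos.mpr hu
  obtain ⟨h1, h2⟩ := main_aux (u2 - u1) (s2 - s1) ha
      (fun t => xPos u1 s1 t - xPos u2 s2 t - 1)
      (fun t => nLab u2 t - nLab u1 t - 1)
      (by
        intro t
        have f2 := Int.lt_floor_add_one (-2 * u1 * t ^ ((2:ℝ)/3) - s1 * t ^ ((1:ℝ)/3))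
        have f3 := Int.floor_le (-2 * u2 * t ^ ((2:ℝ)/3) - s2 * t ^ ((1:ℝ)/3))
        simp only [xPos]
        push_cast
        linarith)
      (by
        intro t
        have f1 := Int.floor_le (-2 * u1 * t ^ ((2:ℝ)/3) - s1 * t ^ ((1:ℝ)/3))
        have f4 := Int.lt_floor_add_one (-2 * u2 * t ^ ((2:ℝ)/3) - s2 * t ^ ((1:ℝ)/3))
        simp only [xPos]
        push_cast
        linarith)
      (by
        intro t
        have f2 := Int.lt_floor_add_one (t / 4 + u2 * t ^ ((2:ℝ)/3))
        have f3 := Int.floor_le (t / 4 + u1 * t ^ ((2:ℝ)/3))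
        simp only [nLab]
        push_cast
        linarith)
      (by
        intro t
        have f1 := Int.floor_le (t / 4 + u2 * t ^ ((2:ℝ)/3))
        have f4 := Int.lt_floor_add_one (t / 4 + u1 * t ^ ((2:ℝ)/3))
        simp only [nLab]
        push_cast
        linarith)
  refine ⟨h1, ?_⟩
  refine h2.congr fun t => ?_
  have hz : -(xPos u1 s1 t - xPos u2 s2 t - 1) - 1 = xPos u2 s2 t - xPos u1 s1 t := by ring
  simp only [hz]
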